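/- arXiv:1504.07212 — 2 statements merged into one kernel-verified Lean document; each statement's English description precedes it below -/
import Mathlib

section
/- Let A be a real symmetric m×m matrix and p > 0 such that pI - A is positive definite. Define Φ_p(A) = -p²(A - pI)^{-1} - pI. Then A is negative semidefinite if and only if Φ_p(A) is negative semidefinite. -/
open scoped Matrix

/-- For a real symmetric `m × m` matrix `A` and `p > 0` with `pI - A`
positive definite, setting `Φ_p(A) = -p² (A - pI)⁻¹ - pI`, we have
`A` negative semidefinite iff `Φ_p(A)` negative semidefinite. -/
theorem stmt0 {m : ℕ} (A : Matrix (Fin m) (Fin m) ℝ) (hA : A.IsHermitian)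
    (p : ℝ) (hp : 0 < p) (hpd : (p • (1 : Matrix (Fin m) (Fin m) ℝ) - A).PosDef) :
    (-A).PosSemidef ↔
      (-(-(p ^ 2) • (A - p • (1 : Matrix (Fin m) (Fin m) ℝ))⁻¹ -
        p • (1 : Matrix (Fin m) (Fin m) ℝ))).PosSemidef := by
  classical
  set S : Matrix (Fin m) (Fin m) ℝ := (hA.eigenvectorUnitary : Matrix (Fin m) (Fin m) ℝ)
    with hSdef
  have hSS : S * star S = 1 := Matrix.mem_unitaryGroup_iff.mp hA.eigenvectorUnitary.2
  have hSS' : star S * S = 1 := Matrix.mem_unitaryGroup_iff'.mp hA.eigenvectorUnitary.2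
  set d : Fin m → ℝ := hA.eigenvalues with hddef
  -- conjugation map
  set C : (Fin m → ℝ) → Matrix (Fin m) (Fin m) ℝ :=
    fun v => S * Matrix.diagonal v * star S with hCdef
  have hCmulC : ∀ v w, C v * C w = C (v * w) := by
    intro v w
    simp only [hCdef, Matrix.mul_assoc]
    rw [← Matrix.mul_assoc (star S) S, hSS', Matrix.one_mul,
      ← Matrix.mul_assoc (Matrix.diagonal v), Matrix.diagonal_mul_diagonal]
    rfl
  have hCone : C (fun _ => 1) = 1 := by
    simp only [hCdef, Matrix.diagonal_one, Matrix.mul_one, hSS]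
  have hCsub : ∀ v w, C v - C w = C (v - w) := by
    intro v w
    simp only [hCdef]
    have hvw : v - w = fun i => v i - w i := rfl
    rw [hvw, ← Matrix.diagonal_sub, Matrix.mul_sub, Matrix.sub_mul]
  have hCsmul : ∀ (c : ℝ) v, c • C v = C (c • v) := by
    intro c v
    simp only [hCdef, Matrix.diagonal_smul, Matrix.mul_smul, Matrix.smul_mul]
  have hAeq : A = C d := by
    have := hA.spectral_theorem
    simpa [hCdef] using this
  have hpone : p • (1 : Matrix (Fin m) (Fin m) ℝ) = C (fun _ => p) := by
    rw [← hCone, hCsmul]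
    have : (p • fun _ : Fin m => (1 : ℝ)) = fun _ : Fin m => p := by
      funext i; simp
    rw [this]
  -- the key PSD criterion
  have key : ∀ v, (C v).PosSemidef ↔ ∀ i, 0 ≤ v i := by
    intro v
    constructor
    · intro h i
      have h2 := h.mul_mul_conjTranspose_same (star S)
      have hstar : (star S)ᴴ = S := by
        simp [Matrix.star_eq_conjTranspose]
      have h3 : star S * C v * (star S)ᴴ = Matrix.diagonal v := by
        rw [hstar]
        simp only [hCdef]
        rw [Matrix.mul_assoc S, ← Matrix.mul_assoc (star S) S, hSS', Matrix.one_mul,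
          Matrix.mul_assoc, hSS', Matrix.mul_one]
      rw [h3] at h2
      exact Matrix.posSemidef_diagonal_iff.mp h2 i
    · intro h
      have h2 := (Matrix.posSemidef_diagonal_iff.mpr h).mul_mul_conjTranspose_same S
      simpa [hCdef, Matrix.star_eq_conjTranspose] using h2
  -- eigenvalue bound : d i < p
  have hdp : ∀ i, d i < p := by
    intro i
    have hv0 : (⇑(hA.eigenvectorBasis i) : Fin m → ℝ) ≠ 0 := by
      have := hA.eigenvectorBasis.orthonormal.ne_zero i
      intro h
      apply this
      ext j
      exact congrFun h j
    have h1 := hpd.dotProduct_mulVec_pos hv0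
    have h2 : (p • (1 : Matrix (Fin m) (Fin m) ℝ) - A) *ᵥ ⇑(hA.eigenvectorBasis i)
        = (p - d i) • ⇑(hA.eigenvectorBasis i) := by
      rw [Matrix.sub_mulVec, Matrix.smul_mulVec, Matrix.one_mulVec,
        hA.mulVec_eigenvectorBasis, sub_smul]
    rw [h2] at h1
    have h3 : star (⇑(hA.eigenvectorBasis i)) ⬝ᵥ
        ((p - d i) • ⇑(hA.eigenvectorBasis i))
        = (p - d i) * (⇑(hA.eigenvectorBasis i) ⬝ᵥ ⇑(hA.eigenvectorBasis i)) := by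
      simp [dotProduct_smul, star_trivial, mul_comm]
    rw [h3] at h1
    have h4 : 0 ≤ ⇑(hA.eigenvectorBasis i) ⬝ᵥ ⇑(hA.eigenvectorBasis i) := by
      apply Finset.sum_nonneg
      intro j _
      exact mul_self_nonneg _
    nlinarith
  have hne : ∀ i, d i - p ≠ 0 := fun i => sub_ne_zero.mpr (ne_of_lt (hdp i))
  -- inverse formula
  have hsub : A - p • (1 : Matrix (Fin m) (Fin m) ℝ) = C (fun i => d i - p) := by
    rw [hAeq, hpone, hCsub]
    rfl
  have hinv : (A - p • (1 : Matrix (Fin m) (Fin m) ℝ))⁻¹ = C (fun i => (d i - p)⁻¹) := by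
    apply Matrix.inv_eq_right_inv
    rw [hsub, hCmulC]
    have : ((fun i => d i - p) * fun i => (d i - p)⁻¹) = fun _ : Fin m => (1 : ℝ) := by
      funext i
      exact mul_inv_cancel₀ (hne i)
    rw [this, hCone]
  -- the target matrix
  have hPhi : -(-(p ^ 2) • (A - p • (1 : Matrix (Fin m) (Fin m) ℝ))⁻¹ -
      p • (1 : Matrix (Fin m) (Fin m) ℝ)) = C (fun i => p ^ 2 * (d i - p)⁻¹ + p) := by
    rw [hinv, neg_sub, hpone, hCsmul, hCsub]
    have : ((fun _ : Fin m => p) - (-(p ^ 2)) • fun i => (d i - p)⁻¹)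
        = fun i => p ^ 2 * (d i - p)⁻¹ + p := by
      funext i
      simp only [Pi.sub_apply, Pi.smul_apply, smul_eq_mul]
      ring
    rw [this]
  have hnegA : -A = C (fun i => -(d i)) := by
    rw [hAeq, ← neg_one_smul ℝ (C d), hCsmul]
    have : ((-1 : ℝ) • d) = fun i => -(d i) := by
      funext i; simp
    rw [this]
  rw [hnegA, hPhi, key, key]
  -- scalar equivalence
  constructor
  · intro h i
    have h1 := h i
    have ht : d i - p < 0 := sub_neg.mpr (hdp i)
    have h2 : p ^ 2 * (d i - p)⁻¹ * (d i - p) = p ^ 2 := by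
      rw [mul_assoc, inv_mul_cancel₀ (hne i), mul_one]
    nlinarith [sq_nonneg p, mul_pos hp hp]
  · intro h i
    have h1 := h i
    have ht : d i - p < 0 := sub_neg.mpr (hdp i)
    have h2 : p ^ 2 * (d i - p)⁻¹ * (d i - p) = p ^ 2 := by
      rw [mul_assoc, inv_mul_cancel₀ (hne i), mul_one]
    nlinarith [sq_nonneg p]
end

section
/- Let a < b be real numbers and let p(t) = P_0 + P_1(t-a) + P_2(t-a)² + P_3(t-a)³ be a cubic polynomial. If there exist 2×2 symmetric positive semidefinite matrices X = [[x,y],[y,z]] and S = [[s,v],[v,w]] such that P_0 = (b-a)s, P_1 = x - s + 2(b-a)v, P_2 = 2y - 2v + (b-a)w, P_3 = z - w, then p(t) ≥ 0 for all t ∈ [a, b]. -/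
open Matrix

lemma quad_nonneg (x y z : ℝ)
    (hX : (!![x, y; y, z] : Matrix (Fin 2) (Fin 2) ℝ).PosSemidef) (u : ℝ) :
    0 ≤ x + 2 * y * u + z * u ^ 2 := by
  have h := hX.dotProduct_mulVec_nonneg ![1, u]
  simp [Matrix.mulVec, dotProduct, Fin.sum_univ_two] at h
  nlinarith [h]

/-- If the coefficients of a cubic `p(t) = P₀ + P₁(t-a) + P₂(t-a)² + P₃(t-a)³`
can be written via two `2×2` positive semidefinite matrices
`X = [[x,y],[y,z]]`, `S = [[s,v],[v,w]]` as `P₀ = (b-a)s`, `P₁ = x - s + 2(b-a)v`,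
`P₂ = 2y - 2v + (b-a)w`, `P₃ = z - w`, then `p(t) ≥ 0` on `[a,b]`. -/
theorem stmt14 (a b : ℝ) (hab : a < b) (P0 P1 P2 P3 : ℝ)
    (x y z s v w : ℝ)
    (hX : (!![x, y; y, z] : Matrix (Fin 2) (Fin 2) ℝ).PosSemidef)
    (hS : (!![s, v; v, w] : Matrix (Fin 2) (Fin 2) ℝ).PosSemidef)
    (h0 : P0 = (b - a) * s)
    (h1 : P1 = x - s + 2 * (b - a) * v)
    (h2 : P2 = 2 * y - 2 * v + (b - a) * w)
    (h3 : P3 = z - w) :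
    ∀ t ∈ Set.Icc a b,
      0 ≤ P0 + P1 * (t - a) + P2 * (t - a) ^ 2 + P3 * (t - a) ^ 3 := by
  intro t ht
  obtain ⟨ht1, ht2⟩ := ht
  have hq1 := quad_nonneg x y z hX (t - a)
  have hq2 := quad_nonneg s v w hS (t - a)
  have key : P0 + P1 * (t - a) + P2 * (t - a) ^ 2 + P3 * (t - a) ^ 3 =
      (t - a) * (x + 2 * y * (t - a) + z * (t - a) ^ 2)
      + (b - t) * (s + 2 * v * (t - a) + w * (t - a) ^ 2) := by
    subst h0 h1 h2 h3; ring
  rw [key]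
  have h1' := mul_nonneg (sub_nonneg.2 ht1) hq1
  have h2' := mul_nonneg (sub_nonneg.2 ht2) hq2
  linarith
end
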